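/- arXiv:1108.1880 — 7 statements merged into one kernel-verified Lean document; each statement's English description precedes it below -/
import Mathlib

section
/- A commutative supertropical monoid U is a supertropical semiring (i.e., the forced addition is associative and distributive) if and only if the following condition holds: for all x, y, z in U, if 0 < ex < ey (in the ordered ghost ideal eU) and exz = eyz, then yz = eyz (i.e., yz lies in eU). -/
universe u v w

class STM (U : Type u) extends CommMonoid U, Zero U where
  zero_mul' : ∀ x : U, 0 * x = 0
  e : U
  e_idem : e * e = e
  ghost_zero : ∀ x : U, e * x = 0 → x = 0
  le : U → U → Prop
  le_refl : ∀ x : U, le x x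
  le_trans : ∀ x y z : U, le x y → le y z → le x z
  le_total : ∀ x y : U, le x y ∨ le y x
  le_antisymm : ∀ x y : U, e * x = x → e * y = y → le x y → le y x → x = y
  le_e : ∀ x y : U, le x y ↔ le (e * x) (e * y)
  mul_le_mul : ∀ x y z : U, le x y → le (x * z) (y * z)
  zero_le : ∀ x : U, le 0 x

namespace STM

variable {U : Type u} [STM U]

/-- `x` is a ghost element, i.e. `x ∈ eU`. -/
def Ghost (x : U) : Prop := e * x = x

/-- strict inequality for the ordering of the ghost ideal -/
def slt (x y : U) : Prop := le x y ∧ ¬ le y x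

open scoped Classical in
/-- the forced addition on a supertropical monoid -/
noncomputable def add (x y : U) : U :=
  if slt (e * x) (e * y) then y
  else if slt (e * y) (e * x) then x
  else e * x

/-- the supertropical monoid `U` "is" a (supertropical) semiring: the forced
addition is associative and distributive. -/
def IsSemiring (U : Type u) [STM U] : Prop :=
  (∀ x y z : U, add (add x y) z = add x (add y z)) ∧
  (∀ x y z : U, add x y * z = add (x * z) (y * z))

end STM

open STM

/-- A transmission between supertropical monoids. -/
structure IsTransmission {U : Type u} {V : Type v} [STM U] [STM V] (α : U → V) : Prop where
  map_zero : α 0 = 0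
  map_one : α 1 = 1
  map_mul : ∀ x y : U, α (x * y) = α x * α y
  map_e : α (STM.e : U) = (STM.e : V)
  mono : ∀ x y : U, Ghost x → Ghost y → STM.le x y → STM.le (α x) (α y)


section AuxSTM

variable {U : Type u} [STM U]

private lemma ghost_emul (x : U) : STM.e * (STM.e * x) = STM.e * x := by
  rw [← mul_assoc, STM.e_idem]

private lemma ghost0 : STM.e * (0 : U) = 0 := by
  rw [mul_comm, STM.zero_mul']

private lemma not_slt_le {x y : U} (h : ¬ slt x y) : STM.le y x := by
  unfold slt at h
  push_neg at h
  rcases STM.le_total x y with h1 | h1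
  · exact h h1
  · exact h1

private lemma slt_asymm {x y : U} (h : slt x y) : ¬ slt y x := fun h' => h.2 h'.1

private lemma eq_of_not_slt {x y : U} (h1 : ¬ slt (STM.e * x) (STM.e * y))
    (h2 : ¬ slt (STM.e * y) (STM.e * x)) : STM.e * x = STM.e * y :=
  STM.le_antisymm _ _ (ghost_emul x) (ghost_emul y) (not_slt_le h2) (not_slt_le h1)

private lemma not_slt_of_eq {x y : U} (h : x = y) : ¬ slt x y := by
  intro h'; rw [h] at h'; exact h'.2 (STM.le_refl y)

private lemma tri (x y : U) :
    slt (STM.e * x) (STM.e * y) ∨ slt (STM.e * y) (STM.e * x) ∨ STM.e * x = STM.e * y := by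
  by_cases h1 : slt (STM.e * x) (STM.e * y)
  · exact Or.inl h1
  by_cases h2 : slt (STM.e * y) (STM.e * x)
  · exact Or.inr (Or.inl h2)
  exact Or.inr (Or.inr (eq_of_not_slt h1 h2))

private lemma slt_trans {x y z : U} (h1 : slt x y) (h2 : slt y z) : slt x z :=
  ⟨STM.le_trans _ _ _ h1.1 h2.1, fun h => h2.2 (STM.le_trans _ _ _ h h1.1)⟩

private lemma slt_of_slt_of_le {x y z : U} (h1 : slt x y) (h2 : STM.le y z) : slt x z :=
  ⟨STM.le_trans _ _ _ h1.1 h2, fun h => h1.2 (STM.le_trans _ _ _ h2 h)⟩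

private lemma slt_of_le_of_slt {x y z : U} (h1 : STM.le x y) (h2 : slt y z) : slt x z :=
  ⟨STM.le_trans _ _ _ h1 h2.1, fun h => h2.2 (STM.le_trans _ _ _ h h1)⟩

private lemma stm_add_eq_right {x y : U} (h : slt (STM.e * x) (STM.e * y)) :
    STM.add x y = y := by
  unfold STM.add; rw [if_pos h]

private lemma stm_add_eq_left {x y : U} (h : slt (STM.e * y) (STM.e * x)) :
    STM.add x y = x := by
  unfold STM.add; rw [if_neg (slt_asymm h), if_pos h]

private lemma add_eq_ghost {x y : U} (h : STM.e * x = STM.e * y) :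
    STM.add x y = STM.e * x := by
  unfold STM.add; rw [if_neg (not_slt_of_eq h), if_neg (not_slt_of_eq h.symm)]

private lemma add_assoc' (x y z : U) :
    STM.add (STM.add x y) z = STM.add x (STM.add y z) := by
  rcases tri x y with hab | hab | hab
  · rw [stm_add_eq_right hab]
    rcases tri y z with hbc | hbc | hbc
    · rw [stm_add_eq_right hbc, stm_add_eq_right (slt_trans hab hbc)]
    · rw [stm_add_eq_left hbc, stm_add_eq_right hab]
    · rw [add_eq_ghost hbc,
        stm_add_eq_right (x := x) (y := STM.e * y) (by rw [ghost_emul]; exact hab)]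
  · rw [stm_add_eq_left hab]
    rcases tri y z with hbc | hbc | hbc
    · rw [stm_add_eq_right hbc]
    · rw [stm_add_eq_left hbc, stm_add_eq_left hab, stm_add_eq_left (slt_trans hbc hab)]
    · rw [add_eq_ghost hbc,
        stm_add_eq_left (x := x) (y := STM.e * y) (by rw [ghost_emul]; exact hab)]
      rw [hbc] at hab
      rw [stm_add_eq_left hab]
  · rw [add_eq_ghost hab]
    rcases tri y z with hbc | hbc | hbc
    · rw [stm_add_eq_right (x := STM.e * x) (y := z) (by rw [ghost_emul, hab]; exact hbc),
        stm_add_eq_right hbc,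
        stm_add_eq_right (x := x) (y := z) (by rw [hab]; exact hbc)]
    · rw [stm_add_eq_left (x := STM.e * x) (y := z) (by rw [ghost_emul, hab]; exact hbc),
        stm_add_eq_left hbc, add_eq_ghost hab]
    · rw [add_eq_ghost (x := STM.e * x) (y := z) (by rw [ghost_emul, hab]; exact hbc),
        add_eq_ghost hbc,
        add_eq_ghost (x := x) (y := STM.e * y) (by rw [ghost_emul]; exact hab),
        ghost_emul]

private lemma e_mul_mul (x z : U) : STM.e * (x * z) = STM.e * x * z := by
  rw [mul_assoc]

private lemma eq_zero_of_not_slt_zero {x : U} (h : ¬ slt (0 : U) (STM.e * x)) : x = 0 := by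
  apply STM.ghost_zero
  exact STM.le_antisymm _ _ (ghost_emul x) ghost0 (not_slt_le h) (STM.zero_le _)

end AuxSTM

/-- A commutative supertropical monoid is a supertropical semiring iff condition (Dis) holds:
whenever `0 < ex < ey` and `exz = eyz`, then `yz = eyz`, i.e. `yz ∈ eU`. -/
theorem stm_is_semiring_iff {U : Type u} [STM U] :
    IsSemiring U ↔
      ∀ x y z : U, slt 0 (STM.e * x) → slt (STM.e * x) (STM.e * y) →
        STM.e * x * z = STM.e * y * z → y * z = STM.e * (y * z) := by
  constructor
  · rintro ⟨-, hdist⟩ x y z h0 hab heq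
    have h := hdist x y z
    rw [stm_add_eq_right hab] at h
    have heq' : STM.e * (x * z) = STM.e * (y * z) := by
      rw [e_mul_mul, e_mul_mul, heq]
    rw [add_eq_ghost heq'] at h
    rw [heq'] at h
    exact h
  · intro hDis
    refine ⟨fun x y z => add_assoc' x y z, fun x y z => ?_⟩
    rcases tri x y with hab | hab | hab
    · rw [stm_add_eq_right hab]
      rcases tri (x * z) (y * z) with h | h | h
      · rw [stm_add_eq_right h]
      · exact absurd (by rw [e_mul_mul, e_mul_mul]; exact STM.mul_le_mul _ _ z hab.1) h.2
      · rw [add_eq_ghost h]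
        by_cases h0 : slt (0 : U) (STM.e * x)
        · rw [h]
          exact hDis x y z h0 hab (by rw [← mul_assoc, ← mul_assoc] at h; exact h)
        · have hx0 : x = 0 := eq_zero_of_not_slt_zero h0
          have hyz : y * z = 0 :=
            STM.ghost_zero _ (by rw [← h, hx0, STM.zero_mul', ghost0])
          rw [hyz, hx0, STM.zero_mul', ghost0]
    · rw [stm_add_eq_left hab]
      rcases tri (x * z) (y * z) with h | h | h
      · exact absurd (by rw [e_mul_mul, e_mul_mul]; exact STM.mul_le_mul _ _ z hab.1) h.2
      · rw [stm_add_eq_left h]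
      · rw [add_eq_ghost h]
        by_cases h0 : slt (0 : U) (STM.e * y)
        · exact hDis y x z h0 hab
            (by rw [← mul_assoc, ← mul_assoc] at h; exact h.symm)
        · have hy0 : y = 0 := eq_zero_of_not_slt_zero h0
          have hxz : x * z = 0 :=
            STM.ghost_zero _ (by rw [h, hy0, STM.zero_mul', ghost0])
          rw [hxz, ghost0]
    · rw [add_eq_ghost hab,
        add_eq_ghost (x := x * z) (y := y * z) (by rw [← mul_assoc, ← mul_assoc, hab]),
        mul_assoc]
end

section
/- Let α: U → V be a surjective transmission between supertropical monoids that is injective on (eU) \ {0}. If U is a semiring, then V is a semiring. -/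
universe u v w

open STM

section Aux

variable {U : Type u} {V : Type v} [STM U] [STM V]

lemma stm_ghost_zero : Ghost (0 : U) := by
  show STM.e * 0 = 0
  rw [mul_comm]; exact STM.zero_mul' _

lemma stm_ghost_mul_e (x : U) : Ghost ((STM.e : U) * x) := by
  show STM.e * (STM.e * x) = STM.e * x
  rw [← mul_assoc, STM.e_idem]

lemma stm_ghost_map {α : U → V} (hα : IsTransmission α) {a : U} (ha : Ghost a) :
    Ghost (α a) := by
  show STM.e * α a = α a
  rw [← hα.map_e, ← hα.map_mul, ha]

lemma stm_not_slt_self (a : U) : ¬ slt a a := fun h => h.2 (STM.le_refl a)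

lemma stm_eq_of_not_slt {a b : U} (ha : Ghost a) (hb : Ghost b)
    (h1 : ¬ slt a b) (h2 : ¬ slt b a) : a = b := by
  rcases STM.le_total a b with h | h
  · exact STM.le_antisymm a b ha hb h (by by_contra hc; exact h1 ⟨h, hc⟩)
  · exact STM.le_antisymm a b ha hb (by by_contra hc; exact h2 ⟨h, hc⟩) h

lemma stm_slt_map {α : U → V} (hα : IsTransmission α)
    (hinj : ∀ x y : U, Ghost x → Ghost y → x ≠ 0 → y ≠ 0 → α x = α y → x = y)
    {a b : U} (ha : Ghost a) (hb : Ghost b) (hs : slt a b) :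
    slt (α a) (α b) ∨ (α a = 0 ∧ α b = 0) := by
  have hle : STM.le (α a) (α b) := hα.mono a b ha hb hs.1
  by_cases hba : STM.le (α b) (α a)
  · have heq : α a = α b :=
      STM.le_antisymm _ _ (stm_ghost_map hα ha) (stm_ghost_map hα hb) hle hba
    right
    by_cases ha0 : a = 0
    · subst ha0
      exact ⟨hα.map_zero, heq.symm.trans hα.map_zero⟩
    · have hb0 : b ≠ 0 := by
        rintro rfl
        exact hs.2 (STM.zero_le a)
      have := hinj a b ha hb ha0 hb0 heq
      subst this
      exact absurd hs.1 (fun h => hs.2 h)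
  · exact Or.inl ⟨hle, hba⟩

lemma stm_map_add {α : U → V} (hα : IsTransmission α)
    (hinj : ∀ x y : U, Ghost x → Ghost y → x ≠ 0 → y ≠ 0 → α x = α y → x = y)
    (x y : U) : α (add x y) = add (α x) (α y) := by
  classical
  have hex : α ((STM.e : U) * x) = STM.e * α x := by rw [hα.map_mul, hα.map_e]
  have hey : α ((STM.e : U) * y) = STM.e * α y := by rw [hα.map_mul, hα.map_e]
  have hga := stm_ghost_mul_e x
  have hgb := stm_ghost_mul_e y
  by_cases h1 : slt ((STM.e : U) * x) (STM.e * y)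
  · rcases stm_slt_map hα hinj hga hgb h1 with hs | ⟨h0a, h0b⟩
    · rw [hex, hey] at hs
      rw [add, if_pos h1, add, if_pos hs]
    · rw [hex] at h0a; rw [hey] at h0b
      have hy0 : α y = 0 := STM.ghost_zero _ h0b
      rw [add, if_pos h1, add, h0a, h0b,
        if_neg (stm_not_slt_self (0 : V)), if_neg (stm_not_slt_self (0 : V)), hy0]
  · by_cases h2 : slt ((STM.e : U) * y) (STM.e * x)
    · rcases stm_slt_map hα hinj hgb hga h2 with hs | ⟨h0b, h0a⟩
      · rw [hex] at hs; rw [hey] at hs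
        have hns : ¬ slt ((STM.e : V) * α x) (STM.e * α y) := fun h => hs.2 h.1
        rw [add, if_neg h1, if_pos h2, add, if_neg hns, if_pos hs]
      · rw [hex] at h0a; rw [hey] at h0b
        have hx0 : α x = 0 := STM.ghost_zero _ h0a
        rw [add, if_neg h1, if_pos h2, add, h0a, h0b,
          if_neg (stm_not_slt_self (0 : V)), if_neg (stm_not_slt_self (0 : V)), hx0]
    · have heq : (STM.e : U) * x = STM.e * y := stm_eq_of_not_slt hga hgb h1 h2
      have heqV : (STM.e : V) * α x = STM.e * α y := by
        rw [← hex, ← hey, heq]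
      rw [add, if_neg h1, if_neg h2, add, heqV,
        if_neg (stm_not_slt_self _), if_neg (stm_not_slt_self _), ← heqV, hex]

end Aux

/-- If a surjective transmission `α : U → V` is injective on `(eU) \\ {0}` and `U` is a
semiring, then `V` is a semiring. -/
theorem semiring_of_surjective_transmission {U : Type u} {V : Type v}
    [STM U] [STM V] (α : U → V) (hα : IsTransmission α)
    (hsurj : Function.Surjective α)
    (hinj : ∀ x y : U, Ghost x → Ghost y → x ≠ 0 → y ≠ 0 → α x = α y → x = y)
    (hU : IsSemiring U) :
    IsSemiring V := by
  have key : ∀ x y : U, α (add x y) = add (α x) (α y) := stm_map_add hα hinj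
  constructor
  · intro a b c
    obtain ⟨x, rfl⟩ := hsurj a
    obtain ⟨y, rfl⟩ := hsurj b
    obtain ⟨z, rfl⟩ := hsurj c
    rw [← key, ← key, ← key, ← key, hU.1]
  · intro a b c
    obtain ⟨x, rfl⟩ := hsurj a
    obtain ⟨y, rfl⟩ := hsurj b
    obtain ⟨z, rfl⟩ := hsurj c
    rw [← key, ← hα.map_mul, hU.2, key, hα.map_mul, hα.map_mul]
end

section
/- Let U be a supertropical monoid and E a TE-relation on U. Then the quotient set U/E carries a unique structure of a supertropical monoid such that the quotient map π_E: U → U/E, x ↦ [x]_E, is a transmission. -/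
universe u v w

open STM

/-- TE-relation on a supertropical monoid. -/
structure IsTE {U : Type u} [STM U] (E : U → U → Prop) : Prop where
  refl : ∀ x : U, E x x
  symm : ∀ x y : U, E x y → E y x
  trans : ∀ x y z : U, E x y → E y z → E x z
  mul_compat : ∀ x y z : U, E x y → E (x * z) (y * z)
  order_compat : ∀ x1 x2 x3 x4 : U, Ghost x1 → Ghost x2 → Ghost x3 → Ghost x4 →
    STM.le x1 x2 → STM.le x3 x4 → E x1 x4 → E x2 x3 → E x1 x2
  ghost_zero : ∀ x : U, E (STM.e * x) 0 → E x 0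

-- auxiliary block to be inserted before the theorem (test file built below)
namespace STMQuot

open STM

variable {U : Type u} [STM U] {E : U → U → Prop}

lemma mul_zero'' (x : U) : x * 0 = 0 := by rw [mul_comm]; exact STM.zero_mul' x

lemma e_mul_e_mul (x : U) : (e : U) * (e * x) = e * x := by
  rw [← mul_assoc, STM.e_idem]

lemma ghost_e (x : U) : Ghost ((e : U) * x) := e_mul_e_mul x

lemma exactE (hE : IsTE E) {a b : U} (h : Quot.mk E a = Quot.mk E b) : E a b := by
  have : Quot.lift (E a) (fun x y hxy => propext
      ⟨fun h => hE.trans _ _ _ h hxy, fun h => hE.trans _ _ _ h (hE.symm _ _ hxy)⟩)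
      (Quot.mk E b) := by
    rw [← h]; exact hE.refl a
  exact this

lemma mulc' (hE : IsTE E) (z : U) {x y : U} (h : E x y) : E (z * x) (z * y) := by
  rw [mul_comm z x, mul_comm z y]; exact hE.mul_compat _ _ _ h

/-- key consequence of order compatibility -/
lemma key (hE : IsTE E) {a b a' b' : U} (ga : Ghost a) (gb : Ghost b) (gb' : Ghost b')
    (ga' : Ghost a') (h1 : le a b) (h2 : le b' a') (h3 : E a a') (h4 : E b b') : E a b :=
  hE.order_compat a b b' a' ga gb gb' ga' h1 h2 h3 h4

/-- the relation inducing the order on the quotient -/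
def rle (E : U → U → Prop) (x y : U) : Prop :=
  le ((e : U) * x) (e * y) ∨ E ((e : U) * x) (e * y)

lemma rle_mono_right (hE : IsTE E) (x : U) {y y' : U} (h : E y y') (hxy : rle E x y) :
    rle E x y' := by
  have hyy : E ((e : U) * y) (e * y') := mulc' hE e h
  rcases hxy with hxy | hxy
  · rcases STM.le_total ((e : U) * x) (e * y') with h' | h'
    · exact Or.inl h'
    · refine Or.inr (hE.trans _ _ _ ?_ hyy)
      exact key hE (ghost_e x) (ghost_e y) (ghost_e y') (ghost_e x) hxy h' (hE.refl _) hyy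
  · exact Or.inr (hE.trans _ _ _ hxy hyy)

lemma rle_mono_left (hE : IsTE E) {x x' : U} (y : U) (h : E x x') (hxy : rle E x y) :
    rle E x' y := by
  have hxx : E ((e : U) * x) (e * x') := mulc' hE e h
  rcases hxy with hxy | hxy
  · rcases STM.le_total ((e : U) * x') (e * y) with h' | h'
    · exact Or.inl h'
    · refine Or.inr (hE.trans _ _ _ (hE.symm _ _ hxx) ?_)
      exact key hE (ghost_e x) (ghost_e y) (ghost_e y) (ghost_e x') hxy h' hxx (hE.refl _)
  · exact Or.inr (hE.trans _ _ _ (hE.symm _ _ hxx) hxy)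

lemma rle_congr_right (hE : IsTE E) (x : U) {y y' : U} (h : E y y') : rle E x y = rle E x y' :=
  propext ⟨rle_mono_right hE x h, rle_mono_right hE x (hE.symm _ _ h)⟩

lemma rle_congr_left (hE : IsTE E) {x x' : U} (y : U) (h : E x x') : rle E x y = rle E x' y :=
  propext ⟨rle_mono_left hE y h, rle_mono_left hE y (hE.symm _ _ h)⟩

/-- The supertropical monoid structure on the quotient. -/
def qSTM (hE : IsTE E) : STM (Quot E) where
  mul := Quot.map₂ (· * ·) (fun a _ _ h => mulc' hE a h) (fun _ _ b h => hE.mul_compat _ _ b h)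
  one := Quot.mk E 1
  mul_assoc := by
    rintro ⟨x⟩ ⟨y⟩ ⟨z⟩
    exact congrArg (Quot.mk E) (mul_assoc x y z)
  one_mul := by rintro ⟨x⟩; exact congrArg (Quot.mk E) (one_mul x)
  mul_one := by rintro ⟨x⟩; exact congrArg (Quot.mk E) (mul_one x)
  mul_comm := by rintro ⟨x⟩ ⟨y⟩; exact congrArg (Quot.mk E) (mul_comm x y)
  zero := Quot.mk E 0
  zero_mul' := by rintro ⟨x⟩; exact congrArg (Quot.mk E) (STM.zero_mul' x)
  e := Quot.mk E e
  e_idem := congrArg (Quot.mk E) STM.e_idem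
  ghost_zero := by
    rintro ⟨x⟩ h
    exact Quot.sound (hE.ghost_zero x (exactE hE h))
  le := Quot.lift₂ (rle E) (fun a _ _ h => rle_congr_right hE a h)
    (fun _ _ b h => rle_congr_left hE b h)
  le_refl := by rintro ⟨x⟩; exact Or.inl (STM.le_refl _)
  le_trans := by
    rintro ⟨x⟩ ⟨y⟩ ⟨z⟩ hxy hyz
    rcases hxy with hxy | hxy <;> rcases hyz with hyz | hyz
    · exact Or.inl (STM.le_trans _ _ _ hxy hyz)
    · rcases STM.le_total ((e : U) * x) (e * z) with h' | h'
      · exact Or.inl h'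
      · refine Or.inr (hE.symm _ _ ?_)
        exact key hE (ghost_e z) (ghost_e x) (ghost_e x) (ghost_e y) h' hxy
          (hE.symm _ _ hyz) (hE.refl _)
    · rcases STM.le_total ((e : U) * x) (e * z) with h' | h'
      · exact Or.inl h'
      · refine Or.inr (hE.trans _ _ _ hxy ?_)
        exact key hE (ghost_e y) (ghost_e z) (ghost_e z) (ghost_e x) hyz h'
          (hE.symm _ _ hxy) (hE.refl _)
    · exact Or.inr (hE.trans _ _ _ hxy hyz)
  le_total := by
    rintro ⟨x⟩ ⟨y⟩
    rcases STM.le_total ((e : U) * x) (e * y) with h | h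
    · exact Or.inl (Or.inl h)
    · exact Or.inr (Or.inl h)
  le_antisymm := by
    rintro ⟨x⟩ ⟨y⟩ gx gy hxy hyx
    have gx' : Quot.mk E ((e : U) * x) = Quot.mk E x := gx
    have gy' : Quot.mk E ((e : U) * y) = Quot.mk E y := gy
    have h : E ((e : U) * x) (e * y) := by
      rcases hxy with hxy | hxy
      · rcases hyx with hyx | hyx
        · exact key hE (ghost_e x) (ghost_e y) (ghost_e y) (ghost_e x) hxy hyx
            (hE.refl _) (hE.refl _)
        · exact hE.symm _ _ hyx
      · exact hxy
    rw [← gx', ← gy']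
    exact Quot.sound h
  le_e := by
    rintro ⟨x⟩ ⟨y⟩
    show rle E x y ↔ rle E ((e : U) * x) ((e : U) * y)
    unfold rle
    rw [e_mul_e_mul, e_mul_e_mul]
  mul_le_mul := by
    rintro ⟨x⟩ ⟨y⟩ ⟨z⟩ h
    show rle E (x * z) (y * z)
    rcases h with h | h
    · refine Or.inl ?_
      rw [← mul_assoc, ← mul_assoc]
      exact STM.mul_le_mul _ _ z h
    · refine Or.inr ?_
      rw [← mul_assoc, ← mul_assoc]
      exact hE.mul_compat _ _ z h
  zero_le := by
    rintro ⟨x⟩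
    show rle E 0 x
    refine Or.inl ?_
    rw [mul_zero'']
    exact STM.zero_le _

lemma qTrans (hE : IsTE E) : @IsTransmission U (Quot E) _ (qSTM hE) (Quot.mk E) := by
  letI := qSTM hE
  refine ⟨rfl, rfl, fun x y => rfl, rfl, ?_⟩
  intro x y gx gy h
  have gx' : (e : U) * x = x := gx
  have gy' : (e : U) * y = y := gy
  show rle E x y
  refine Or.inl ?_
  rw [gx', gy']
  exact h

theorem zero_ext {α : Type v} {a b : Zero α} (h : @Zero.zero α a = @Zero.zero α b) : a = b := by
  cases a; cases b; cases h; rfl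

theorem stm_ext {V : Type v} {S T : STM V}
    (hcm : S.toCommMonoid = T.toCommMonoid)
    (hz : S.toZero = T.toZero)
    (he : S.e = T.e) (hle : S.le = T.le) : S = T := by
  cases S; cases T
  cases hcm; cases hz
  dsimp at he hle
  cases he; cases hle
  rfl

end STMQuot


/-- For a TE-relation `E` on a supertropical monoid `U`, the quotient `U/E` carries a
unique structure of a supertropical monoid making the quotient map a transmission. -/
theorem quotient_unique_stm_structure {U : Type u} [STM U] (E : U → U → Prop)
    (hE : IsTE E) :
    ∃! S : STM (Quot E), @IsTransmission U (Quot E) _ S (Quot.mk E) := by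
  refine ⟨STMQuot.qSTM hE, STMQuot.qTrans hE, ?_⟩
  intro S hS
  letI := S
  have hmulS : ∀ a b : U, Quot.mk E a * Quot.mk E b = Quot.mk E (a * b) :=
    fun a b => (hS.map_mul a b).symm
  have heS : ∀ a : U, (STM.e : Quot E) * Quot.mk E a = Quot.mk E ((e : U) * a) := fun a => by
    rw [← hS.map_e, hmulS]
  have gS : ∀ a : U, (STM.e : Quot E) * Quot.mk E ((e : U) * a) = Quot.mk E ((e : U) * a) :=
    fun a => by rw [heS]; exact congrArg _ (STMQuot.e_mul_e_mul a)
  have key_le : ∀ x y : U,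
      STM.le (Quot.mk E x) (Quot.mk E y) ↔ STMQuot.rle E x y := by
    intro x y
    constructor
    · intro h
      rcases STM.le_total ((e : U) * x) ((e : U) * y) with h' | h'
      · exact Or.inl h'
      · have h1 : STM.le (Quot.mk E ((e : U) * x)) (Quot.mk E ((e : U) * y)) := by
          have := (STM.le_e (Quot.mk E x) (Quot.mk E y)).mp h
          rwa [heS, heS] at this
        have h2 : STM.le (Quot.mk E ((e : U) * y)) (Quot.mk E ((e : U) * x)) :=
          hS.mono _ _ (STMQuot.ghost_e y) (STMQuot.ghost_e x) h'
        have h3 := STM.le_antisymm _ _ (gS x) (gS y) h1 h2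
        exact Or.inr (STMQuot.exactE hE h3)
    · rintro (h | h)
      · have h1 : STM.le (Quot.mk E ((e : U) * x)) (Quot.mk E ((e : U) * y)) :=
          hS.mono _ _ (STMQuot.ghost_e x) (STMQuot.ghost_e y) h
        refine (STM.le_e _ _).mpr ?_
        rwa [heS, heS]
      · have hxy : Quot.mk E ((e : U) * x) = Quot.mk E ((e : U) * y) := Quot.sound h
        refine (STM.le_e _ _).mpr ?_
        rw [heS, heS, hxy]
        exact STM.le_refl _
  refine STMQuot.stm_ext ?_ ?_ ?_ ?_
  · refine CommMonoid.ext ?_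
    funext a b
    refine Quot.induction_on₂ a b fun x y => ?_
    exact hmulS x y
  · refine STMQuot.zero_ext ?_
    exact hS.map_zero.symm
  · exact hS.map_e.symm
  · funext a b
    refine Quot.induction_on₂ a b fun x y => ?_
    exact propext (key_le x y)
end

section
/- Let U be a supertropical monoid and 𝔞 an ideal of U (a nonempty subset with U·𝔞 ⊆ 𝔞). The saturum of 𝔞, defined as sat(𝔞) = {x ∈ U : ex ≤ ea for some a ∈ 𝔞}, is again an ideal of U, and the relation E(𝔞) defined by x ~ y iff (x = y or both x, y ∈ sat(𝔞)) is a TE-relation on U. -/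
universe u v w

open STM

/-- The saturum of an ideal `𝔞` of a supertropical monoid is again an ideal, and the
relation `E(𝔞)` (identifying all elements of the saturum) is a TE-relation. -/
theorem saturum_ideal_and_TE {U : Type u} [STM U] (a : Set U) (hne : a.Nonempty)
    (hideal : ∀ x ∈ a, ∀ y : U, y * x ∈ a) :
    (∀ x : U, (∃ b ∈ a, STM.le (STM.e * x) (STM.e * b)) →
      ∀ y : U, (∃ b ∈ a, STM.le (STM.e * (y * x)) (STM.e * b))) ∧
    IsTE (fun x y : U =>
      x = y ∨ ((∃ b ∈ a, STM.le (STM.e * x) (STM.e * b)) ∧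
               (∃ b ∈ a, STM.le (STM.e * y) (STM.e * b)))) := by
  -- sat is an ideal
  have hsat : ∀ x : U, (∃ b ∈ a, STM.le (STM.e * x) (STM.e * b)) →
      ∀ y : U, (∃ b ∈ a, STM.le (STM.e * (y * x)) (STM.e * b)) := by
    rintro x ⟨b, hb, hle⟩ y
    refine ⟨y * b, hideal b hb y, ?_⟩
    have := STM.mul_le_mul (STM.e * x) (STM.e * b) y hle
    have h1 : STM.e * x * y = STM.e * (y * x) := by rw [mul_assoc, mul_comm x y]
    have h2 : STM.e * b * y = STM.e * (y * b) := by rw [mul_assoc, mul_comm b y]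
    rwa [h1, h2] at this
  -- closure downward: if e*x ≤ e*y and y ∈ sat then x ∈ sat
  have hdown : ∀ x y : U, STM.le (STM.e * x) (STM.e * y) →
      (∃ b ∈ a, STM.le (STM.e * y) (STM.e * b)) →
      (∃ b ∈ a, STM.le (STM.e * x) (STM.e * b)) := by
    rintro x y hxy ⟨b, hb, hle⟩
    exact ⟨b, hb, STM.le_trans _ _ _ hxy hle⟩
  refine ⟨hsat, ?_⟩
  constructor
  · intro x; exact Or.inl rfl
  · rintro x y (rfl | ⟨h1, h2⟩)
    · exact Or.inl rfl
    · exact Or.inr ⟨h2, h1⟩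
  · rintro x y z (rfl | ⟨h1, h2⟩) (rfl | ⟨h3, h4⟩)
    · exact Or.inl rfl
    · exact Or.inr ⟨h3, h4⟩
    · exact Or.inr ⟨h1, h2⟩
    · exact Or.inr ⟨h1, h4⟩
  · rintro x y z (rfl | ⟨h1, h2⟩)
    · exact Or.inl rfl
    · refine Or.inr ⟨?_, ?_⟩
      · have := hsat x h1 z
        simpa [mul_comm] using this
      · have := hsat y h2 z
        simpa [mul_comm] using this
  · rintro x1 x2 x3 x4 g1 g2 g3 g4 h12 h34 (rfl | ⟨s1, s4⟩) (rfl | ⟨s2, s3⟩)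
    · -- x1 = x4, x2 = x3 : antisymmetry
      refine Or.inl (STM.le_antisymm _ _ g1 g2 h12 ?_)
      exact h34
    · -- x1 = x4, x2,x3 ∈ sat : x1 ≤ x2 so x1 ∈ sat
      refine Or.inr ⟨hdown x1 x2 ((STM.le_e x1 x2).mp h12) s2, s2⟩
    · -- x1,x4 ∈ sat, x2 = x3 ≤ x4 so x2 ∈ sat
      refine Or.inr ⟨s1, hdown x2 x4 ((STM.le_e x2 x4).mp h34) s4⟩
    · exact Or.inr ⟨s1, s2⟩
  · rintro x (h | ⟨s1, s2⟩)
    · exact Or.inl (STM.ghost_zero x h)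
    · refine Or.inr ⟨?_, s2⟩
      obtain ⟨b, hb, hle⟩ := s1
      refine ⟨b, hb, ?_⟩
      have he : STM.e * (STM.e * x) = STM.e * x := by
        rw [← mul_assoc, STM.e_idem]
      rwa [he] at hle
end

section
/- Let U be a supertropical monoid. Let S(U) be the set of tangible NC-products in U, i.e., elements x ∈ U \ eU of the form x = yz with y, z ∈ U and some y' ∈ eU satisfying y' < ey and y'z = eyz. Then the quotient Û = U / E(U, U·S(U) ∪ eU) is a supertropical semiring, where E(U, 𝔄) for an ideal 𝔄 ⊇ eU is the TE-relation identifying each element of 𝔄 with its ghost. -/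
universe u v w

open STM

/-- The set of tangible NC-products in `U`. -/
def NCset (U : Type u) [STM U] : Set U :=
  {x : U | ¬ Ghost x ∧ ∃ y z y' : U, x = y * z ∧ Ghost y' ∧ slt y' (STM.e * y) ∧
      y' * z = STM.e * y * z}

/-- The ideal `U·S(U) ∪ eU` of `U` generated by the tangible NC-products and the ghosts. -/
def NCideal (U : Type u) [STM U] : Set U :=
  {x : U | Ghost x ∨ ∃ u s : U, s ∈ NCset U ∧ x = u * s}

/-- The TE-relation `E(U, U·S(U) ∪ eU)` identifying each element of the ideal with its ghost. -/
def NCrel (U : Type u) [STM U] : U → U → Prop := fun x y =>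
  x = y ∨ (x ∈ NCideal U ∧ y ∈ NCideal U ∧ STM.e * x = STM.e * y)

section Aux

variable {W : Type w} [STM W]

lemma STM.e_ghost (x : W) : Ghost (STM.e * x) := by
  show STM.e * (STM.e * x) = STM.e * x
  rw [← mul_assoc, STM.e_idem]

lemma STM.slt_asymm {a b : W} (h : slt a b) : ¬ slt b a := fun h' => h.2 h'.1

lemma STM.slt_irrefl (a : W) : ¬ slt a a := fun h => h.2 h.1

lemma STM.slt_trans {a b c : W} (h : slt a b) (h' : slt b c) : slt a c :=
  ⟨STM.le_trans _ _ _ h.1 h'.1, fun hca => h.2 (STM.le_trans _ _ _ h'.1 hca)⟩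

lemma STM.ghost_tri (a b : W) (ha : Ghost a) (hb : Ghost b) :
    slt a b ∨ a = b ∨ slt b a := by
  rcases STM.le_total a b with h | h
  · by_cases h' : STM.le b a
    · exact Or.inr (Or.inl (STM.le_antisymm a b ha hb h h'))
    · exact Or.inl ⟨h, h'⟩
  · by_cases h' : STM.le a b
    · exact Or.inr (Or.inl (STM.le_antisymm a b ha hb h' h))
    · exact Or.inr (Or.inr ⟨h, h'⟩)

lemma STM.add_lt {x y : W} (h : slt (STM.e * x) (STM.e * y)) : STM.add x y = y := by
  rw [STM.add, if_pos h]

lemma STM.add_gt {x y : W} (h : slt (STM.e * y) (STM.e * x)) : STM.add x y = x := by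
  rw [STM.add, if_neg (STM.slt_asymm h), if_pos h]

lemma STM.add_eq {x y : W} (h : STM.e * x = STM.e * y) : STM.add x y = STM.e * x := by
  rw [STM.add, if_neg, if_neg]
  · rw [h]; exact STM.slt_irrefl _
  · rw [h]; exact STM.slt_irrefl _

lemma STM.criterion_isSemiring
    (h : ∀ x y z : W, slt (STM.e * x) (STM.e * y) → STM.e * x * z = STM.e * y * z →
      Ghost (y * z)) : IsSemiring W := by
  have eg : ∀ x : W, STM.e * (STM.e * x) = STM.e * x := fun x => STM.e_ghost x
  constructor
  · intro x y z
    rcases STM.ghost_tri (STM.e * x) (STM.e * y) (STM.e_ghost x) (STM.e_ghost y)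
      with hab | hab | hab
    · rw [STM.add_lt hab]
      rcases STM.ghost_tri (STM.e * y) (STM.e * z) (STM.e_ghost y) (STM.e_ghost z)
        with hbc | hbc | hbc
      · rw [STM.add_lt hbc, STM.add_lt (STM.slt_trans hab hbc)]
      · rw [STM.add_eq hbc, STM.add_lt (x := x) (y := STM.e * y)
          (by rw [eg]; exact hab)]
      · rw [STM.add_gt hbc, STM.add_lt hab]
    · rw [STM.add_eq hab]
      rcases STM.ghost_tri (STM.e * y) (STM.e * z) (STM.e_ghost y) (STM.e_ghost z)
        with hbc | hbc | hbc
      · rw [STM.add_lt hbc, STM.add_lt (x := STM.e * x) (by rw [eg, hab]; exact hbc),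
          STM.add_lt (x := x) (by rw [hab]; exact hbc)]
      · rw [STM.add_eq hbc, STM.add_eq (x := STM.e * x) (by rw [eg, hab, hbc]),
          STM.add_eq (x := x) (y := STM.e * y) (by rw [eg, hab]), eg]
      · rw [STM.add_gt hbc, STM.add_gt (x := STM.e * x) (by rw [eg, hab]; exact hbc),
          STM.add_eq hab]
    · rw [STM.add_gt hab]
      rcases STM.ghost_tri (STM.e * x) (STM.e * z) (STM.e_ghost x) (STM.e_ghost z)
        with hac | hac | hac
      · rw [STM.add_lt hac, STM.add_lt (STM.slt_trans hab hac), STM.add_lt hac]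
      · rw [STM.add_eq hac, STM.add_lt (x := y) (y := z) (by rw [← hac]; exact hab),
          STM.add_eq hac]
      · rw [STM.add_gt hac]
        rcases STM.ghost_tri (STM.e * y) (STM.e * z) (STM.e_ghost y) (STM.e_ghost z)
          with hbc | hbc | hbc
        · rw [STM.add_lt hbc, STM.add_gt hac]
        · rw [STM.add_eq hbc, STM.add_gt (y := STM.e * y) (by rw [eg]; exact hab)]
        · rw [STM.add_gt hbc, STM.add_gt hab]
  · intro x y z
    have hmul : ∀ w : W, STM.e * (w * z) = (STM.e * w) * z := fun w => (mul_assoc _ _ _).symm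
    rcases STM.ghost_tri (STM.e * x) (STM.e * y) (STM.e_ghost x) (STM.e_ghost y)
      with hab | hab | hab
    · rw [STM.add_lt hab]
      have hle : STM.le (STM.e * (x * z)) (STM.e * (y * z)) := by
        rw [hmul, hmul]; exact STM.mul_le_mul _ _ _ hab.1
      rcases STM.ghost_tri (STM.e * (x * z)) (STM.e * (y * z)) (STM.e_ghost _) (STM.e_ghost _)
        with hc | hc | hc
      · rw [STM.add_lt hc]
      · have hg := h x y z hab (by rw [← hmul, ← hmul]; exact hc)
        rw [STM.add_eq hc, hc, hg]
      · exact absurd hle hc.2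
    · rw [STM.add_eq hab, STM.add_eq (x := x * z) (by rw [hmul, hmul, hab]), hmul]
    · rw [STM.add_gt hab]
      have hle : STM.le (STM.e * (y * z)) (STM.e * (x * z)) := by
        rw [hmul, hmul]; exact STM.mul_le_mul _ _ _ hab.1
      rcases STM.ghost_tri (STM.e * (y * z)) (STM.e * (x * z)) (STM.e_ghost _) (STM.e_ghost _)
        with hc | hc | hc
      · rw [STM.add_gt hc]
      · have hg := h y x z hab (by rw [← hmul, ← hmul]; exact hc)
        rw [STM.add_eq (x := x * z) hc.symm, hg]
      · exact absurd hle hc.2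

end Aux

/-- The quotient `Û = U / E(U, U·S(U) ∪ eU)` of a supertropical monoid by the TE-relation
collapsing the ideal generated by the tangible NC-products to ghosts is a supertropical
semiring.  (Stated for any realization of the quotient: a surjective transmission whose
equivalence kernel is this relation.) -/
theorem associated_semiring_is_semiring {U : Type u} {V : Type v} [STM U] [STM V]
    (σ : U → V) (hσ : IsTransmission σ) (hsurj : Function.Surjective σ)
    (hker : ∀ x y : U, σ x = σ y ↔ NCrel U x y) :
    IsSemiring V := by
  apply STM.criterion_isSemiring
  intro x y z hlt hcz
  obtain ⟨a, rfl⟩ := hsurj x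
  obtain ⟨b, rfl⟩ := hsurj y
  obtain ⟨c, rfl⟩ := hsurj z
  have hsm : ∀ u v : U, σ (u * v) = σ u * σ v := hσ.map_mul
  have hse : ∀ u : U, σ (STM.e * u) = STM.e * σ u := fun u => by
    rw [hsm, hσ.map_e]
  -- `e * a * c = e * b * c` in `U`
  have hker' : σ (STM.e * a * c) = σ (STM.e * b * c) := by
    simp only [hsm, hσ.map_e]
    exact hcz
  have hUc : STM.e * a * c = STM.e * b * c := by
    rcases (hker _ _).1 hker' with h | ⟨_, _, h⟩
    · exact h
    · have h1 : STM.e * (STM.e * a * c) = STM.e * a * c := by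
        rw [← mul_assoc, ← mul_assoc, STM.e_idem]
      have h2 : STM.e * (STM.e * b * c) = STM.e * b * c := by
        rw [← mul_assoc, ← mul_assoc, STM.e_idem]
      rw [← h1, ← h2, h]
  -- `slt (e*a) (e*b)` in `U`
  have hnba : ¬ STM.le (STM.e * b) (STM.e * a) := fun hle => by
    have := hσ.mono _ _ (STM.e_ghost b) (STM.e_ghost a) hle
    rw [hse, hse] at this
    exact hlt.2 this
  have hUab : slt (STM.e * a) (STM.e * b) := by
    rcases STM.le_total (STM.e * a) (STM.e * b) with h | h
    · exact ⟨h, hnba⟩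
    · exact absurd h hnba
  -- `b * c` lies in the NC-ideal, hence its image is ghost
  show STM.e * (σ b * σ c) = σ b * σ c
  rw [← hsm, ← hse]
  by_cases hg : Ghost (b * c)
  · rw [hg]
  · have hmem : b * c ∈ NCideal U := by
      refine Or.inr ⟨1, b * c, ⟨hg, b, c, STM.e * a, rfl, STM.e_ghost a, hUab, hUc⟩, ?_⟩
      rw [one_mul]
    have hmem' : STM.e * (b * c) ∈ NCideal U := Or.inl (STM.e_ghost _)
    have : σ (STM.e * (b * c)) = σ (b * c) := by
      refine (hker _ _).2 (Or.inr ⟨hmem', hmem, ?_⟩)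
      rw [← mul_assoc, STM.e_idem]
    rw [this]
end

section
/- Every monotone transmission α: U → V between ordered supertropical monoids is a semiring homomorphism (with respect to the forced additions on U and V). -/
universe u v w

open STM

/-- `r` makes the supertropical monoid `U` an ordered supertropical monoid. -/
structure IsOST {U : Type u} [STM U] (r : U → U → Prop) : Prop where
  refl : ∀ x : U, r x x
  trans : ∀ x y z : U, r x y → r y z → r x z
  antisymm : ∀ x y : U, r x y → r y x → x = y
  total : ∀ x y : U, r x y ∨ r y x
  mul_right : ∀ x y z : U, r x y → r (x * z) (y * z)
  restrict : ∀ x y : U, Ghost x → Ghost y → (r x y ↔ STM.le x y)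
  zero_one : r 0 1
  one_e : r 1 (STM.e : U)

namespace STM

variable {U : Type u} [STM U]

lemma ghost_e_mul' (x : U) : Ghost (e * x : U) := by
  unfold Ghost; rw [← mul_assoc, e_idem]

lemma add_of_slt' {x y : U} (h : slt (e * x) (e * y)) : add x y = y := by
  unfold add; rw [if_pos h]

lemma add_of_slt'' {x y : U} (h : slt (e * y) (e * x)) : add x y = x := by
  unfold add; rw [if_neg (fun h' => h.2 h'.1), if_pos h]

lemma add_of_le_le' {x y : U} (h1 : le (e * x) (e * y)) (h2 : le (e * y) (e * x)) :
    add x y = e * x := by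
  unfold add; rw [if_neg (fun h' => h'.2 h2), if_neg (fun h' => h'.2 h1)]

lemma add_comm' (x y : U) : add x y = add y x := by
  rcases le_total (e * x) (e * y) with h | h
  · by_cases h2 : le (e * y) (e * x)
    · rw [add_of_le_le' h h2, add_of_le_le' h2 h,
        le_antisymm _ _ (ghost_e_mul' x) (ghost_e_mul' y) h h2]
    · rw [add_of_slt' ⟨h, h2⟩, add_of_slt'' ⟨h, h2⟩]
  · by_cases h2 : le (e * x) (e * y)
    · rw [add_of_le_le' h2 h, add_of_le_le' h h2,
        le_antisymm _ _ (ghost_e_mul' x) (ghost_e_mul' y) h2 h]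
    · rw [add_of_slt'' ⟨h, h2⟩, add_of_slt' ⟨h, h2⟩]

end STM

section Key

variable {U : Type u} {V : Type v} [STM U] [STM V]

/-- an OST order puts every element below its ghost companion -/
lemma IsOST.le_e_mul {r : U → U → Prop} (hr : IsOST r) (x : U) : r x (STM.e * x) := by
  have := hr.mul_right 1 STM.e x hr.one_e
  simpa using this

/-- key case: strict ghost inequality in the source -/
lemma key_case (rU : U → U → Prop) (rV : V → V → Prop) (hrU : IsOST rU) (hrV : IsOST rV)
    (α : U → V) (hα : IsTransmission α)
    (hmono : ∀ x y : U, rU x y → rV (α x) (α y))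
    {x y : U} (h : slt (STM.e * x) (STM.e * y)) : add (α x) (α y) = α y := by
  have he : ∀ z : U, α (STM.e * z) = STM.e * α z := fun z => by
    rw [hα.map_mul, hα.map_e]
  have hr : rU (STM.e * x) (STM.e * y) :=
    (hrU.restrict _ _ (ghost_e_mul' x) (ghost_e_mul' y)).2 h.1
  have hv : STM.le (STM.e * α x) (STM.e * α y) := by
    have := hmono _ _ hr
    rw [he, he] at this
    exact (hrV.restrict _ _ (ghost_e_mul' (α x)) (ghost_e_mul' (α y))).1 this
  by_cases hv2 : STM.le (STM.e * α y) (STM.e * α x)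
  · -- the ghosts collapse; show α y is this common ghost
    have heq : STM.e * α x = STM.e * α y :=
      STM.le_antisymm _ _ (ghost_e_mul' (α x)) (ghost_e_mul' (α y)) hv hv2
    -- rU (e*x) y
    have hxy : rU (STM.e * x) y := by
      rcases hrU.total (STM.e * x) y with h1 | h1
      · exact h1
      · exfalso
        have h2 := hrU.mul_right y (STM.e * x) STM.e h1
        rw [mul_comm y STM.e, mul_comm (STM.e * x) STM.e, ← mul_assoc, STM.e_idem] at h2
        exact h.2 ((hrU.restrict _ _ (ghost_e_mul' y) (ghost_e_mul' x)).1 h2)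
    have h3 : rV (STM.e * α x) (α y) := by
      have := hmono _ _ hxy; rwa [he] at this
    have h4 : rV (α y) (STM.e * α x) := by
      rw [heq]; exact hrV.le_e_mul (α y)
    have hby : α y = STM.e * α x := hrV.antisymm _ _ h4 h3
    rw [add_of_le_le' hv hv2, ← hby]
  · rw [add_of_slt' ⟨hv, hv2⟩]

end Key

/-- Every monotone transmission between ordered supertropical monoids is a semiring
homomorphism for the forced additions. -/
theorem monotone_transmission_is_hom {U : Type u} {V : Type v} [STM U] [STM V]
    (rU : U → U → Prop) (rV : V → V → Prop) (hrU : IsOST rU) (hrV : IsOST rV)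
    (α : U → V) (hα : IsTransmission α)
    (hmono : ∀ x y : U, rU x y → rV (α x) (α y)) :
    α 0 = 0 ∧ α 1 = 1 ∧ (∀ x y : U, α (x * y) = α x * α y) ∧
      ∀ x y : U, α (add x y) = add (α x) (α y) := by
  refine ⟨hα.map_zero, hα.map_one, hα.map_mul, fun x y => ?_⟩
  have he : ∀ z : U, α (STM.e * z) = STM.e * α z := fun z => by
    rw [hα.map_mul, hα.map_e]
  rcases STM.le_total (STM.e * x) (STM.e * y) with h | h
  · by_cases h2 : STM.le (STM.e * y) (STM.e * x)
    · have heq : STM.e * x = STM.e * y :=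
        STM.le_antisymm _ _ (ghost_e_mul' x) (ghost_e_mul' y) h h2
      have hveq : STM.e * α x = STM.e * α y := by rw [← he, ← he, heq]
      have hv1 : STM.le (STM.e * α x) (STM.e * α y) := hveq ▸ STM.le_refl _
      have hv2 : STM.le (STM.e * α y) (STM.e * α x) := hveq ▸ STM.le_refl _
      rw [add_of_le_le' h h2, he, add_of_le_le' hv1 hv2]
    · rw [add_of_slt' ⟨h, h2⟩, key_case rU rV hrU hrV α hα hmono ⟨h, h2⟩]
  · by_cases h2 : STM.le (STM.e * x) (STM.e * y)
    · have heq : STM.e * y = STM.e * x :=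
        STM.le_antisymm _ _ (ghost_e_mul' y) (ghost_e_mul' x) h h2
      have hveq : STM.e * α x = STM.e * α y := by rw [← he, ← he, heq]
      have hv1 : STM.le (STM.e * α x) (STM.e * α y) := hveq ▸ STM.le_refl _
      have hv2 : STM.le (STM.e * α y) (STM.e * α x) := hveq ▸ STM.le_refl _
      rw [add_of_le_le' h2 h, he, add_of_le_le' hv1 hv2]
    · rw [add_of_slt'' ⟨h, h2⟩, add_comm' (α x) (α y),
        key_case rU rV hrU hrV α hα hmono ⟨h, h2⟩]
end

section
/- Let U be an ordered supertropical monoid, V a supertropical monoid, and α: U → V a surjective transmission such that every fiber α⁻¹(p), p ∈ V, is convex in U. Then V, equipped with the total ordering induced by α (i.e., α(x) < α(y) implies x < y implies α(x) ≤ α(y)), is an ordered supertropical monoid. -/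
universe u v w

open STM

/-- If `α : U → V` is a surjective transmission from an ordered supertropical monoid with
all fibers convex, then `V` carries a (unique) total ordering induced by `α` making it an
ordered supertropical monoid. -/
theorem ost_induced_order {U : Type u} {V : Type v} [STM U] [STM V]
    (rU : U → U → Prop) (hrU : IsOST rU) (α : U → V) (hα : IsTransmission α)
    (hsurj : Function.Surjective α)
    (hconv : ∀ x y z : U, α x = α y → rU x z → rU z y → α z = α x) :
    ∃! rV : V → V → Prop, IsOST rV ∧ ∀ x y : U, rU x y → rV (α x) (α y) := by
  classical
  -- induced relation
  set rV : V → V → Prop := fun p q => ∃ x y : U, α x = p ∧ α y = q ∧ rU x y with hrVdef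
  -- key well-definedness lemma from convexity
  have key : ∀ x x' y y' : U, α x = α x' → α y = α y' → rU x y →
      rU x' y' ∨ α x = α y := by
    intro x x' y y' hxx hyy hxy
    rcases hrU.total x' y' with h | h
    · exact Or.inl h
    · right
      rcases hrU.total y x' with h2 | h2
      · exact (hconv x x' y hxx hxy h2).symm
      · exact hxx.trans ((hconv y' y x' hyy.symm h h2).trans hyy.symm)
  have compat : ∀ x y : U, rU x y → rV (α x) (α y) := by
    intro x y h
    exact ⟨x, y, rfl, rfl, h⟩
  have rV_total : ∀ p q : V, rV p q ∨ rV q p := by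
    intro p q
    obtain ⟨x, rfl⟩ := hsurj p
    obtain ⟨y, rfl⟩ := hsurj q
    rcases hrU.total x y with h | h
    · exact Or.inl (compat x y h)
    · exact Or.inr (compat y x h)
  have rV_refl : ∀ p : V, rV p p := by
    intro p
    obtain ⟨x, rfl⟩ := hsurj p
    exact compat x x (hrU.refl x)
  have rV_antisymm : ∀ p q : V, rV p q → rV q p → p = q := by
    rintro p q ⟨x, y, rfl, rfl, hxy⟩ ⟨y', x', hy', hx', hyx⟩
    rcases key y' y x' x hy' hx' hyx with h | h
    · exact (hrU.antisymm x y hxy h) ▸ rfl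
    · exact (hy' ▸ hx' ▸ h).symm
  have rV_trans : ∀ p q r : V, rV p q → rV q r → rV p r := by
    rintro p q r ⟨x, y, rfl, rfl, hxy⟩ ⟨y', z, hy', hz, hyz⟩
    rcases key y' y z z hy' rfl hyz with h | h
    · exact ⟨x, z, rfl, hz, hrU.trans x y z hxy h⟩
    · exact hz ▸ (hy' ▸ h) ▸ ⟨x, y, rfl, rfl, hxy⟩
  have rV_mul : ∀ p q r : V, rV p q → rV (p * r) (q * r) := by
    rintro p q r ⟨x, y, rfl, rfl, hxy⟩
    obtain ⟨z, rfl⟩ := hsurj r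
    exact ⟨x * z, y * z, (hα.map_mul x z), (hα.map_mul y z),
      hrU.mul_right x y z hxy⟩
  -- forward direction of restrict
  have ghost_mul_e : ∀ x : U, Ghost (x * STM.e) := by
    intro x
    show STM.e * (x * STM.e) = x * STM.e
    rw [mul_comm x STM.e, ← mul_assoc, STM.e_idem]
  have restrict_fwd : ∀ p q : V, Ghost p → Ghost q → rV p q → STM.le p q := by
    rintro p q hp hq ⟨x, y, rfl, rfl, hxy⟩
    have h1 : rU (x * STM.e) (y * STM.e) := hrU.mul_right x y STM.e hxy
    have h2 : STM.le (x * STM.e) (y * STM.e) :=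
      (hrU.restrict _ _ (ghost_mul_e x) (ghost_mul_e y)).mp h1
    have h3 := hα.mono _ _ (ghost_mul_e x) (ghost_mul_e y) h2
    have hax : α (x * STM.e) = α x := by
      rw [hα.map_mul, hα.map_e, mul_comm]; exact hp
    have hay : α (y * STM.e) = α y := by
      rw [hα.map_mul, hα.map_e, mul_comm]; exact hq
    rwa [hax, hay] at h3
  have restrict : ∀ p q : V, Ghost p → Ghost q → (rV p q ↔ STM.le p q) := by
    intro p q hp hq
    refine ⟨restrict_fwd p q hp hq, fun hle => ?_⟩
    rcases rV_total p q with h | h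
    · exact h
    · have hle' : STM.le q p := restrict_fwd q p hq hp h
      have : p = q := STM.le_antisymm p q hp hq hle hle'
      exact this ▸ rV_refl p
  refine ⟨rV, ⟨⟨rV_refl, rV_trans, rV_antisymm, rV_total, rV_mul, restrict, ?_, ?_⟩,
      compat⟩, ?_⟩
  · exact ⟨0, 1, hα.map_zero, hα.map_one, hrU.zero_one⟩
  · exact ⟨1, STM.e, hα.map_one, hα.map_e, hrU.one_e⟩
  · rintro rV' ⟨hOST', compat'⟩
    funext p q
    apply propext
    constructor
    · intro h
      rcases rV_total p q with h2 | h2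
      · exact h2
      · have : q = p := by
          obtain ⟨y, x, hy, hx, hyx⟩ := h2
          exact hy ▸ hx ▸ hOST'.antisymm (α y) (α x) (compat' y x hyx) (hy ▸ hx ▸ h)
        exact this ▸ rV_refl q
    · rintro ⟨x, y, rfl, rfl, hxy⟩
      exact compat' x y hxy
end
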